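/- Let c : ℕ → ℝ be bounded, b ∈ ℝ, and suppose the projected dual iterates λ_{k+1} = max(λ_k − (η/T₀) Σ_{t=kT₀}^{(k+1)T₀−1} (c(t) − b), 0) satisfy both: (i) (λ_k) is bounded, and (ii) liminf_{K→∞} (1/K) Σ_{k<K} λ_k · g_k ≤ ε where g_k = (1/T₀)Σ_{t=kT₀}^{(k+1)T₀−1}(c(t) − b). If additionally λ_k ≥ λ_min > 0 for all k, then liminf_{K→∞} (1/K) Σ_{k<K} g_k ≤ ε/λ_min; i.e., when multipliers stay bounded away from zero, the average constraint slack is at most ε/λ_min, so the constraint is satisfied nearly with equality. -/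

import Mathlib

open Filter Finset

/-- Complementary slackness with multipliers bounded away from zero: if the
projected dual iterates are bounded, the Cesàro-average liminf of `λ_k g_k` is at
most `ε`, and `λ_k ≥ λ_min > 0` for all `k`, then the average constraint slack
satisfies `liminf (1/K) Σ g_k ≤ ε/λ_min`. -/
theorem slack_nearly_tight (B b η ε lamMin M : ℝ) (hη : 0 < η)
    (T₀ : ℕ) (hT₀ : 1 ≤ T₀)
    (c : ℕ → ℝ) (hc : ∀ t, |c t| ≤ B)
    (lam : ℕ → ℝ)
    (hupd : ∀ k, lam (k + 1)
      = max (lam k - (η / T₀) * ∑ t ∈ Finset.Ico (k * T₀) ((k + 1) * T₀), (c t - b)) 0)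
    (hbdd : ∀ k, lam k ≤ M)
    (g : ℕ → ℝ)
    (hg : ∀ k, g k = (1 / (T₀ : ℝ)) * ∑ t ∈ Finset.Ico (k * T₀) ((k + 1) * T₀), (c t - b))
    (hprod : Filter.liminf
      (fun K : ℕ => (1 / (K : ℝ)) * ∑ k ∈ Finset.range K, lam k * g k)
      Filter.atTop ≤ ε)
    (hmin : 0 < lamMin) (hge : ∀ k, lamMin ≤ lam k) :
    Filter.liminf (fun K : ℕ => (1 / (K : ℝ)) * ∑ k ∈ Finset.range K, g k)
      Filter.atTop ≤ ε / lamMin := by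
  have hpos : ∀ k, 0 < lam k := fun k => lt_of_lt_of_le hmin (hge k)
  have hM : 0 < M := lt_of_lt_of_le (hpos 0) (hbdd 0)
  -- the projection is never active, so the update is exact
  have hstep : ∀ k, lam (k + 1) = lam k - η * g k := by
    intro k
    have h1 : lam k - (η / ↑T₀) * ∑ t ∈ Finset.Ico (k * T₀) ((k + 1) * T₀), (c t - b)
        = lam k - η * g k := by
      rw [hg k]; ring
    have h2 := hupd k
    rw [h1] at h2
    rcases le_or_gt (lam k - η * g k) 0 with h | h
    · rw [max_eq_right h] at h2
      exact absurd (h2 ▸ hpos (k + 1)) (lt_irrefl 0)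
    · rw [max_eq_left h.le] at h2; exact h2
  have hgk : ∀ k, g k = (lam k - lam (k + 1)) / η := by
    intro k; rw [hstep k]; field_simp; ring
  -- telescoping sum
  have hsum : ∀ K : ℕ, ∑ k ∈ Finset.range K, g k = (lam 0 - lam K) / η := by
    intro K
    calc ∑ k ∈ Finset.range K, g k = ∑ k ∈ Finset.range K, (lam k - lam (k + 1)) / η := by
          exact Finset.sum_congr rfl fun k _ => hgk k
      _ = (∑ k ∈ Finset.range K, (lam k - lam (k + 1))) / η := by
          rw [Finset.sum_div]
      _ = (lam 0 - lam K) / η := by rw [Finset.sum_range_sub' lam K]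
  -- the averaged slack tends to 0
  have htend : Tendsto (fun K : ℕ => (1 / (K : ℝ)) * ∑ k ∈ Finset.range K, g k)
      atTop (nhds 0) := by
    apply squeeze_zero_norm' (a := fun K : ℕ => (M / η) / K)
      ?_ (tendsto_const_div_atTop_nhds_zero_nat (M / η))
    filter_upwards [eventually_ge_atTop 1] with K hK
    have hKpos : (0 : ℝ) < K := by exact_mod_cast hK
    rw [hsum K]
    have hnum : |lam 0 - lam K| ≤ M := by
      rw [abs_le]
      constructor
      · have := hbdd K; have := (hpos 0).le; linarith
      · have := hbdd 0; have := (hpos K).le; linarith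
    have h1 : ‖1 / (K : ℝ) * ((lam 0 - lam K) / η)‖ = |lam 0 - lam K| / (η * K) := by
      rw [Real.norm_eq_abs, abs_mul, abs_div, abs_div, abs_one, abs_of_pos hη,
        abs_of_pos hKpos]
      ring
    rw [h1, div_div]
    exact div_le_div_of_nonneg_right hnum (by positivity) |>.trans_eq rfl
  have hliminf0 : Filter.liminf (fun K : ℕ => (1 / (K : ℝ)) * ∑ k ∈ Finset.range K, g k)
      atTop = 0 := htend.liminf_eq
  rw [hliminf0]
  -- it remains to show 0 ≤ ε / lamMin, i.e. 0 ≤ ε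
  have hεnn : 0 ≤ ε := by
    set u : ℕ → ℝ := fun K => (1 / (K : ℝ)) * ∑ k ∈ Finset.range K, lam k * g k with hu
    -- upper bound on u (for coboundedness)
    have hub : ∀ K, u K ≤ M ^ 2 / η := by
      intro K
      rcases Nat.eq_zero_or_pos K with rfl | hK
      · simp [hu]; positivity
      · have hterm : ∀ k ∈ Finset.range K, lam k * g k ≤ M ^ 2 / η := by
          intro k _
          rw [hgk k, ← mul_div_assoc]
          apply div_le_div_of_nonneg_right ?_ hη.le
          nlinarith [hpos k, hpos (k + 1), hbdd k, hbdd (k + 1)]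
        have := Finset.sum_le_sum hterm
        rw [Finset.sum_const, Finset.card_range, nsmul_eq_mul] at this
        have hKpos : (0 : ℝ) < K := by exact_mod_cast hK
        calc u K ≤ (1 / (K : ℝ)) * ((K : ℝ) * (M ^ 2 / η)) := by
              apply mul_le_mul_of_nonneg_left this (by positivity)
          _ = M ^ 2 / η := by field_simp
    -- lower bound on u
    have hlb : ∀ K : ℕ, 1 ≤ K → -(M ^ 2 / (2 * η)) / K ≤ u K := by
      intro K hK
      have hKpos : (0 : ℝ) < K := by exact_mod_cast hK
      have hterm : ∀ k ∈ Finset.range K,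
          (lam k ^ 2 - lam (k + 1) ^ 2) / (2 * η) ≤ lam k * g k := by
        intro k _
        rw [hgk k]
        rw [div_le_iff₀ (by positivity)]
        have : lam k * ((lam k - lam (k + 1)) / η) * (2 * η)
            = 2 * (lam k * (lam k - lam (k + 1))) := by field_simp
        rw [this]
        nlinarith [sq_nonneg (lam k - lam (k + 1))]
      have hsums := Finset.sum_le_sum hterm
      have htele : ∑ k ∈ Finset.range K, (lam k ^ 2 - lam (k + 1) ^ 2) / (2 * η)
          = (lam 0 ^ 2 - lam K ^ 2) / (2 * η) := by
        rw [← Finset.sum_div, Finset.sum_range_sub' (fun k => lam k ^ 2) K]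
      rw [htele] at hsums
      have h1 : -(M ^ 2) / (2 * η) ≤ (lam 0 ^ 2 - lam K ^ 2) / (2 * η) := by
        apply div_le_div_of_nonneg_right ?_ (by positivity)
        nlinarith [hpos 0, hpos K, hbdd K]
      have h2 : -(M ^ 2) / (2 * η) ≤ ∑ k ∈ Finset.range K, lam k * g k := le_trans h1 hsums
      have : u K = (1 / (K : ℝ)) * ∑ k ∈ Finset.range K, lam k * g k := rfl
      rw [this]
      calc -(M ^ 2 / (2 * η)) / (K : ℝ) = (1 / (K : ℝ)) * (-(M ^ 2) / (2 * η)) := by ring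
        _ ≤ (1 / (K : ℝ)) * ∑ k ∈ Finset.range K, lam k * g k :=
            mul_le_mul_of_nonneg_left h2 (by positivity)
    -- compare liminfs
    have hcb : IsCoboundedUnder (· ≥ ·) atTop u :=
      IsBoundedUnder.isCoboundedUnder_ge (Filter.isBoundedUnder_of ⟨M ^ 2 / η, hub⟩)
    have hbd : IsBoundedUnder (· ≥ ·) atTop (fun K : ℕ => -(M ^ 2 / (2 * η)) / K) := by
      refine Filter.isBoundedUnder_of ⟨-(M ^ 2 / (2 * η)), fun K => ?_⟩
      rcases Nat.eq_zero_or_pos K with rfl | hK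
      · simp; positivity
      · have hKpos : (0 : ℝ) < K := by exact_mod_cast hK
        have hK1 : (1 : ℝ) ≤ K := by exact_mod_cast hK
        rw [neg_div]
        exact neg_le_neg (div_le_self (by positivity) hK1)
    have hle : Filter.liminf (fun K : ℕ => -(M ^ 2 / (2 * η)) / K) atTop
        ≤ Filter.liminf u atTop := by
      apply Filter.liminf_le_liminf _ hbd hcb
      filter_upwards [eventually_ge_atTop 1] with K hK
      exact hlb K hK
    have htend2 : Tendsto (fun K : ℕ => -(M ^ 2 / (2 * η)) / K) atTop (nhds 0) :=
      tendsto_const_div_atTop_nhds_zero_nat _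
    rw [htend2.liminf_eq] at hle
    exact le_trans hle hprod
  positivity
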